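/- Define h(n) = 2^{-n} · Σ_{j=0}^{n} C(n,j) / (1 + (n − 2j)²). Then the sequence √n·h(n) is strictly increasing along even integers n ≥ 0 and strictly increasing along odd integers n ≥ 1; that is, √(n+2)·h(n+2) > √n·h(n) for every integer n ≥ 0. -/

import Mathlib

noncomputable def h (n : ℕ) : ℝ :=
  (∑ j ∈ Finset.range (n + 1), (n.choose j : ℝ) / (1 + ((n : ℝ) - 2 * j) ^ 2)) / 2 ^ n

lemma key_nat (n k : ℕ) :
    (n + 2).choose (k + 1) * ((k + 1) * (n + 1 - k)) = (n + 2) * (n + 1) * n.choose k := by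
  have h1 : (n + 2) * (n + 1).choose k = (n + 2).choose (k + 1) * (k + 1) :=
    Nat.add_one_mul_choose_eq (n + 1) k
  have h2 : n.choose k * (n + 1) = (n + 1).choose k * (n + 1 - k) :=
    Nat.choose_mul_succ_eq n k
  calc (n + 2).choose (k + 1) * ((k + 1) * (n + 1 - k))
      = ((n + 2).choose (k + 1) * (k + 1)) * (n + 1 - k) := by ring
    _ = (n + 2) * ((n + 1).choose k * (n + 1 - k)) := by rw [← h1]; ring
    _ = (n + 2) * (n.choose k * (n + 1)) := by rw [← h2]
    _ = (n + 2) * (n + 1) * n.choose k := by ring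

lemma hrec (n : ℕ) :
    (((n : ℝ) + 2) ^ 2 + 1) * h (n + 2) = 1 + ((n : ℝ) + 1) * ((n : ℝ) + 2) * h n := by
  have key : ∀ j ∈ Finset.range (n + 3),
      (((n : ℝ) + 2) ^ 2 + 1) * (((n + 2).choose j : ℝ) / (1 + ((n : ℝ) + 2 - 2 * j) ^ 2))
      = ((n + 2).choose j : ℝ) + 4 * ((n : ℝ) + 1) * ((n : ℝ) + 2) *
          (if j = 0 then 0 else (n.choose (j - 1) : ℝ) / (1 + ((n : ℝ) + 2 - 2 * j) ^ 2)) := by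
    intro j hj
    have hD : (0 : ℝ) < 1 + ((n : ℝ) + 2 - 2 * j) ^ 2 := by positivity
    rcases j with _ | k
    · simp
      field_simp
      ring
    · simp only [Nat.succ_sub_one, if_neg (Nat.succ_ne_zero k)]
      have hk : k ≤ n + 1 := by
        have := Finset.mem_range.mp hj; omega
      have hcast : ((n + 2).choose (k + 1) : ℝ) * (((k : ℝ) + 1) * ((n : ℝ) + 1 - k))
          = ((n : ℝ) + 2) * ((n : ℝ) + 1) * (n.choose k : ℝ) := by
        have := key_nat n k
        have hc : ((n + 1 - k : ℕ) : ℝ) = (n : ℝ) + 1 - k := by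
          push_cast [Nat.cast_sub hk]; ring
        calc ((n + 2).choose (k + 1) : ℝ) * (((k : ℝ) + 1) * ((n : ℝ) + 1 - k))
            = (((n + 2).choose (k + 1) * ((k + 1) * (n + 1 - k)) : ℕ) : ℝ) := by
              push_cast [hc]; ring
          _ = (((n + 2) * (n + 1) * n.choose k : ℕ) : ℝ) := by rw [this]
          _ = ((n : ℝ) + 2) * ((n : ℝ) + 1) * (n.choose k : ℝ) := by push_cast; ring
      field_simp
      push_cast
      nlinarith [hcast, sq_nonneg ((n : ℝ) - 2 * k)]
  have hsum := Finset.sum_congr rfl key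
  rw [Finset.sum_add_distrib, ← Finset.mul_sum, ← Finset.mul_sum] at hsum
  have hshift : ∑ j ∈ Finset.range (n + 3),
      (if j = 0 then (0:ℝ) else (n.choose (j - 1) : ℝ) / (1 + ((n : ℝ) + 2 - 2 * j) ^ 2))
      = ∑ j ∈ Finset.range (n + 1), (n.choose j : ℝ) / (1 + ((n : ℝ) - 2 * j) ^ 2) := by
    rw [Finset.sum_range_succ' _ (n + 2)]
    have step : ∀ j ∈ Finset.range (n + 2),
        (if j + 1 = 0 then (0:ℝ) else
          (n.choose (j + 1 - 1) : ℝ) / (1 + ((n : ℝ) + 2 - 2 * (j + 1 : ℕ)) ^ 2))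
        = (n.choose j : ℝ) / (1 + ((n : ℝ) - 2 * j) ^ 2) := by
      intro j _
      rw [if_neg (Nat.succ_ne_zero j)]
      have e1 : j + 1 - 1 = j := rfl
      have e2 : (n : ℝ) + 2 - 2 * ((j + 1 : ℕ) : ℝ) = (n : ℝ) - 2 * j := by push_cast; ring
      rw [e1, e2]
    rw [Finset.sum_congr rfl step, Finset.sum_range_succ]
    simp [Nat.choose_succ_self]
  rw [hshift] at hsum
  have hchoose : ∑ j ∈ Finset.range (n + 3), ((n + 2).choose j : ℝ) = 2 ^ (n + 2) := by
    rw [← Nat.cast_sum]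
    norm_cast
    exact Nat.sum_range_choose (n + 2)
  rw [hchoose] at hsum
  have hS2 : ∑ j ∈ Finset.range (n + 3),
      ((n + 2).choose j : ℝ) / (1 + ((n : ℝ) + 2 - 2 * j) ^ 2)
      = h (n + 2) * 2 ^ (n + 2) := by
    unfold h
    rw [div_mul_cancel₀]
    · apply Finset.sum_congr rfl
      intro j hj
      have : ((n + 2 : ℕ) : ℝ) = (n : ℝ) + 2 := by push_cast; ring
      rw [this]
    · positivity
  have hS : ∑ j ∈ Finset.range (n + 1), (n.choose j : ℝ) / (1 + ((n : ℝ) - 2 * j) ^ 2)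
      = h n * 2 ^ n := by
    unfold h
    rw [div_mul_cancel₀]
    positivity
  rw [hS2, hS] at hsum
  have h2 : (2 : ℝ) ^ (n + 2) = 4 * 2 ^ n := by ring
  rw [h2] at hsum
  have hpow : (0:ℝ) < (2:ℝ) ^ n := by positivity
  nlinarith [hsum]

lemma h_nonneg (n : ℕ) : 0 ≤ h n := by
  unfold h
  apply div_nonneg _ (by positivity)
  apply Finset.sum_nonneg
  intro j _
  positivity

lemma h_le_one (n : ℕ) : h n ≤ 1 := by
  unfold h
  rw [div_le_one (by positivity)]
  calc ∑ j ∈ Finset.range (n + 1), (n.choose j : ℝ) / (1 + ((n : ℝ) - 2 * j) ^ 2)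
      ≤ ∑ j ∈ Finset.range (n + 1), (n.choose j : ℝ) := by
        apply Finset.sum_le_sum
        intro j _
        rw [div_le_iff₀ (by positivity)]
        nlinarith [sq_nonneg ((n : ℝ) - 2 * j), Nat.cast_nonneg (n.choose j) (α := ℝ)]
    _ = 2 ^ n := by
        rw [← Nat.cast_sum]
        norm_cast
        exact Nat.sum_range_choose n

theorem stmt_3 (n : ℕ) :
    Real.sqrt n * h n < Real.sqrt (n + 2) * h (n + 2) := by
  have hrn : h (n + 2) = (1 + ((n : ℝ) + 1) * ((n : ℝ) + 2) * h n) / (((n : ℝ) + 2) ^ 2 + 1) := by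
    have := hrec n
    field_simp
    linarith [this]
  have hx0 := h_nonneg n
  have hx1 := h_le_one n
  set x := h n with hxdef
  have hc2 : ((n : ℝ) + 2) ^ 2 + 1 > 0 := by positivity
  rw [hrn]
  rw [← mul_div_assoc, lt_div_iff₀ hc2]
  -- goal: √n * x * ((n+2)^2+1) < √(n+2) * (1 + (n+1)(n+2)x)
  have hA : Real.sqrt ((n : ℝ) + 2) * (((n : ℝ) + 1) * ((n : ℝ) + 2) + 1)
      > Real.sqrt (n : ℝ) * (((n : ℝ) + 2) ^ 2 + 1) := by
    have h1 : Real.sqrt (n : ℝ) * (((n : ℝ) + 2) ^ 2 + 1)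
        = Real.sqrt ((n : ℝ) * (((n : ℝ) + 2) ^ 2 + 1) ^ 2) := by
      rw [Real.sqrt_mul (Nat.cast_nonneg n), Real.sqrt_sq (by positivity)]
    have h2 : Real.sqrt ((n : ℝ) + 2) * (((n : ℝ) + 1) * ((n : ℝ) + 2) + 1)
        = Real.sqrt (((n : ℝ) + 2) * (((n : ℝ) + 1) * ((n : ℝ) + 2) + 1) ^ 2) := by
      rw [Real.sqrt_mul (by positivity), Real.sqrt_sq (by positivity)]
    rw [h1, h2]
    apply Real.sqrt_lt_sqrt (by positivity)
    have hn0 : (0:ℝ) ≤ (n : ℝ) := Nat.cast_nonneg n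
    nlinarith [hn0, sq_nonneg (n:ℝ)]
  have hsqrt2 : 0 < Real.sqrt ((n : ℝ) + 2) := Real.sqrt_pos.mpr (by positivity)
  rcases le_or_gt (Real.sqrt (n:ℝ) * (((n : ℝ) + 2) ^ 2 + 1))
      (Real.sqrt ((n : ℝ) + 2) * (((n : ℝ) + 1) * ((n : ℝ) + 2))) with hle | hgt
  · nlinarith [mul_le_mul_of_nonneg_right hle hx0]
  · nlinarith [mul_le_mul_of_nonneg_left hx1 (le_of_lt (sub_pos.mpr hgt))]
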